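/- arXiv:2506.10892 — 6 statements merged into one kernel-verified Lean document; each statement's English description precedes it below -/
import Mathlib

section
/- Fix an integer K ≥ 2, an index k : Fin K, and ᾱ ∈ [0,1); set σ̃ = √(1 − ᾱ²). Let μ_k = N(ᾱ e_k, σ̃² I_K) be the product Gaussian measure on ℝ^K with mean vector ᾱ e_k and coordinate variance σ̃². Then μ_k({w | ∀ j ≠ k, w j < w k}) = ∫_ℝ φ(z − ᾱ/σ̃) · Φ(z)^{K−1} dz. -/
open MeasureTheory ProbabilityTheory

/-- The standard normal density `φ(z) = exp(-z²/2)/√(2π)`. -/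
noncomputable def stdGaussianPDF (z : ℝ) : ℝ :=
  Real.exp (-z ^ 2 / 2) / Real.sqrt (2 * Real.pi)

/-- The standard normal cumulative distribution function `Φ(z) = ∫_{-∞}^z φ(u) du`. -/
noncomputable def stdGaussianCDF (z : ℝ) : ℝ :=
  ∫ u in Set.Iic z, stdGaussianPDF u

open Real Set

lemma stdGaussianPDF_eq : stdGaussianPDF = gaussianPDFReal 0 1 := by
  funext x
  simp [stdGaussianPDF, gaussianPDFReal, div_eq_inv_mul, mul_comm]

lemma stdGaussianPDF_nonneg (z : ℝ) : 0 ≤ stdGaussianPDF z := by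
  rw [stdGaussianPDF_eq]; exact gaussianPDFReal_nonneg 0 1 z

lemma integrable_stdGaussianPDF : Integrable stdGaussianPDF := by
  rw [stdGaussianPDF_eq]; exact integrable_gaussianPDFReal 0 1

lemma stdGaussianCDF_nonneg (z : ℝ) : 0 ≤ stdGaussianCDF z :=
  setIntegral_nonneg measurableSet_Iic fun x _ => stdGaussianPDF_nonneg x

lemma stdGaussianCDF_le_one (z : ℝ) : stdGaussianCDF z ≤ 1 := by
  have h1 : (∫ u, stdGaussianPDF u) = 1 := by
    rw [stdGaussianPDF_eq]; exact integral_gaussianPDFReal_eq_one 0 one_ne_zero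
  rw [stdGaussianCDF, ← h1]
  exact setIntegral_le_integral integrable_stdGaussianPDF
    (ae_of_all _ fun x => stdGaussianPDF_nonneg x)

lemma monotone_stdGaussianCDF : Monotone stdGaussianCDF := fun a b hab =>
  setIntegral_mono_set integrable_stdGaussianPDF.integrableOn
    (ae_of_all _ fun x => stdGaussianPDF_nonneg x)
    (HasSubset.Subset.eventuallyLE (Iic_subset_Iic.2 hab))

lemma measurable_stdGaussianCDF : Measurable stdGaussianCDF :=
  monotone_stdGaussianCDF.measurable

lemma gaussianReal_one_Iio (t : ℝ) :
    gaussianReal 0 1 (Set.Iio t) = ENNReal.ofReal (stdGaussianCDF t) := by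
  rw [gaussianReal_apply_eq_integral 0 one_ne_zero, ← stdGaussianPDF_eq,
    stdGaussianCDF, integral_Iic_eq_integral_Iio]

section Scaled

variable {α : ℝ}

lemma sigma_pos (hα0 : 0 ≤ α) (hα1 : α < 1) : 0 < Real.sqrt (1 - α ^ 2) :=
  Real.sqrt_pos.2 (by nlinarith)

lemma v_ne_zero (hα0 : 0 ≤ α) (hα1 : α < 1) : Real.toNNReal (1 - α ^ 2) ≠ 0 := by
  rw [ne_eq, Real.toNNReal_eq_zero, not_le]
  nlinarith

lemma map_scale_eq (hα0 : 0 ≤ α) (hα1 : α < 1) :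
    Measure.map (Real.sqrt (1 - α ^ 2) * ·) (gaussianReal 0 1)
      = gaussianReal 0 (Real.toNNReal (1 - α ^ 2)) := by
  rw [gaussianReal_map_const_mul]
  congr 1
  · simp
  · ext
    simp [Real.sq_sqrt (by nlinarith : (0:ℝ) ≤ 1 - α ^ 2),
      Real.coe_toNNReal _ (by nlinarith : (0:ℝ) ≤ 1 - α ^ 2)]

lemma gaussA (hα0 : 0 ≤ α) (hα1 : α < 1) (c : ℝ) :
    gaussianReal 0 (Real.toNNReal (1 - α ^ 2)) (Set.Iio c)
      = ENNReal.ofReal (stdGaussianCDF (c / Real.sqrt (1 - α ^ 2))) := by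
  rw [← map_scale_eq hα0 hα1, Measure.map_apply (measurable_const_mul _) measurableSet_Iio]
  have hpre : (Real.sqrt (1 - α ^ 2) * ·) ⁻¹' Set.Iio c
      = Set.Iio (c / Real.sqrt (1 - α ^ 2)) := by
    ext x
    simp [Set.mem_Iio, lt_div_iff₀ (sigma_pos hα0 hα1), mul_comm]
  rw [hpre, gaussianReal_one_Iio]

lemma pdf_scale (hα0 : 0 ≤ α) (hα1 : α < 1) (z : ℝ) :
    Real.sqrt (1 - α ^ 2) *
        gaussianPDFReal α (Real.toNNReal (1 - α ^ 2)) (Real.sqrt (1 - α ^ 2) * z)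
      = stdGaussianPDF (z - α / Real.sqrt (1 - α ^ 2)) := by
  have h2 : (0:ℝ) ≤ 1 - α ^ 2 := by nlinarith
  have hσ : 0 < Real.sqrt (1 - α ^ 2) := sigma_pos hα0 hα1
  have hσ2 : Real.sqrt (1 - α ^ 2) ^ 2 = 1 - α ^ 2 := Real.sq_sqrt h2
  set σ := Real.sqrt (1 - α ^ 2) with hσdef
  rw [gaussianPDFReal, stdGaussianPDF, Real.coe_toNNReal _ h2, ← hσ2]
  rw [show 2 * Real.pi * σ ^ 2 = (Real.sqrt (2 * Real.pi) * σ) ^ 2 by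
      rw [mul_pow, Real.sq_sqrt Real.two_pi_pos.le],
    Real.sqrt_sq (by positivity)]
  have he : -(σ * z - α) ^ 2 / (2 * σ ^ 2) = -(z - α / σ) ^ 2 / 2 := by
    field_simp
  rw [he]
  have hs : Real.sqrt (2 * Real.pi) ≠ 0 := by positivity
  field_simp

end Scaled


/-- For `K ≥ 2`, `k : Fin K` and `ᾱ ∈ [0,1)`, with `σ̃ = √(1-ᾱ²)`, the product Gaussian
`N(ᾱ e_k, σ̃² I_K)` gives the event that coordinate `k` is the strict maximum the
probability `∫_ℝ φ(z - ᾱ/σ̃) Φ(z)^{K-1} dz`. -/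
theorem gaussian_argmax_at_mean_index (K : ℕ) (hK : 2 ≤ K) (k : Fin K)
    (α : ℝ) (hα0 : 0 ≤ α) (hα1 : α < 1) :
    (Measure.pi fun j : Fin K =>
        gaussianReal (if j = k then α else 0) (Real.toNNReal (1 - α ^ 2)))
        {w | ∀ j ≠ k, w j < w k}
      = ENNReal.ofReal
          (∫ z : ℝ, stdGaussianPDF (z - α / Real.sqrt (1 - α ^ 2))
              * stdGaussianCDF z ^ (K - 1)) := by
  obtain ⟨n, rfl⟩ : ∃ n, K = n + 1 := ⟨K - 1, by omega⟩
  set v : NNReal := Real.toNNReal (1 - α ^ 2) with hvdef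
  have hv : v ≠ 0 := v_ne_zero hα0 hα1
  set σ := Real.sqrt (1 - α ^ 2) with hσdef
  have hσ : 0 < σ := sigma_pos hα0 hα1
  set μs : Fin (n + 1) → Measure ℝ := fun j => gaussianReal (if j = k then α else 0) v with hμs
  set T : Set (ℝ × (Fin n → ℝ)) := {p | ∀ j, p.2 j < p.1} with hTdef
  have hT : MeasurableSet T := by
    have : T = ⋂ j, {p : ℝ × (Fin n → ℝ) | p.2 j < p.1} := by ext p; simp [hTdef]
    rw [this]
    exact MeasurableSet.iInter fun j =>
      measurableSet_lt (by fun_prop) measurable_fst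
  have hpre : {w : Fin (n + 1) → ℝ | ∀ j ≠ k, w j < w k}
      = (MeasurableEquiv.piFinSuccAbove (fun _ => ℝ) k) ⁻¹' T := by
    ext w
    simp only [Set.mem_setOf_eq, Set.mem_preimage, MeasurableEquiv.piFinSuccAbove,
      MeasurableEquiv.coe_mk, Fin.insertNthEquiv, Equiv.coe_fn_symm_mk, Fin.removeNth,
      hTdef]
    constructor
    · intro h j; exact h _ (Fin.succAbove_ne k j)
    · intro h j hj
      obtain ⟨j', rfl⟩ := Fin.exists_succAbove_eq hj
      exact h j'
  have hmain : Measure.pi μs {w | ∀ j ≠ k, w j < w k}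
      = ((μs k).prod (Measure.pi fun j : Fin n => μs (k.succAbove j))) T := by
    rw [hpre, ← Measure.map_apply (MeasurableEquiv.piFinSuccAbove (fun _ => ℝ) k).measurable hT,
      (measurePreserving_piFinSuccAbove μs k).map_eq]
  rw [hmain, Measure.prod_apply hT]
  have hμk : μs k = gaussianReal α v := by simp [hμs]
  have hμj : ∀ j : Fin n, μs (k.succAbove j) = gaussianReal 0 v := fun j => by
    simp [hμs, Fin.succAbove_ne k j]
  have hslice : ∀ x : ℝ, (Measure.pi fun j : Fin n => μs (k.succAbove j)) (Prod.mk x ⁻¹' T)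
      = ENNReal.ofReal (stdGaussianCDF (x / σ) ^ n) := by
    intro x
    have hps : Prod.mk x ⁻¹' T = Set.pi Set.univ (fun _ : Fin n => Set.Iio x) := by
      ext y; simp [hTdef, Set.mem_pi]
    rw [hps, Measure.pi_pi]
    simp_rw [hμj, hvdef, gaussA hα0 hα1 x]
    rw [Finset.prod_const, Finset.card_univ, Fintype.card_fin,
      ← ENNReal.ofReal_pow (stdGaussianCDF_nonneg _)]
  simp_rw [hslice, hμk]
  -- lintegral to integral
  have hFσmeas : Measurable fun x : ℝ => stdGaussianCDF (x / σ) ^ n :=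
    (measurable_stdGaussianCDF.comp (measurable_id.div_const σ)).pow_const n
  have hFnonneg : ∀ x : ℝ, 0 ≤ stdGaussianCDF (x / σ) ^ n :=
    fun x => pow_nonneg (stdGaussianCDF_nonneg _) n
  have hint : Integrable (fun x => stdGaussianCDF (x / σ) ^ n * gaussianPDFReal α v x) := by
    refine (integrable_gaussianPDFReal α v).mono'
      (hFσmeas.mul (measurable_gaussianPDFReal α v)).aestronglyMeasurable
      (ae_of_all _ fun x => ?_)
    rw [Real.norm_eq_abs, abs_of_nonneg (mul_nonneg (hFnonneg x) (gaussianPDFReal_nonneg α v x))]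
    calc stdGaussianCDF (x / σ) ^ n * gaussianPDFReal α v x
        ≤ 1 * gaussianPDFReal α v x := by
          refine mul_le_mul_of_nonneg_right ?_ (gaussianPDFReal_nonneg α v x)
          exact pow_le_one₀ (stdGaussianCDF_nonneg _) (stdGaussianCDF_le_one _)
      _ = gaussianPDFReal α v x := one_mul _
  have hlin : ∫⁻ x, ENNReal.ofReal (stdGaussianCDF (x / σ) ^ n) ∂(gaussianReal α v)
      = ENNReal.ofReal (∫ x, stdGaussianCDF (x / σ) ^ n * gaussianPDFReal α v x) := by
    rw [gaussianReal_of_var_ne_zero _ hv,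
      lintegral_withDensity_eq_lintegral_mul _ (measurable_gaussianPDF α v)
        hFσmeas.ennreal_ofReal]
    have hptw : ∀ x : ℝ,
        (gaussianPDF α v * fun x => ENNReal.ofReal (stdGaussianCDF (x / σ) ^ n)) x
          = ENNReal.ofReal (stdGaussianCDF (x / σ) ^ n * gaussianPDFReal α v x) := by
      intro x
      simp only [Pi.mul_apply, gaussianPDF_def]
      rw [← ENNReal.ofReal_mul (gaussianPDFReal_nonneg α v x), mul_comm]
    rw [lintegral_congr hptw]
    exact (ofReal_integral_eq_lintegral_ofReal hint
      (ae_of_all _ fun x => mul_nonneg (hFnonneg x) (gaussianPDFReal_nonneg α v x))).symm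
  rw [hlin]
  congr 1
  -- real change of variables
  have hcov := Measure.integral_comp_mul_left
    (fun x => stdGaussianCDF (x / σ) ^ n * gaussianPDFReal α v x) σ
  rw [abs_of_pos (inv_pos.2 hσ), smul_eq_mul] at hcov
  have : ∫ x, stdGaussianCDF (x / σ) ^ n * gaussianPDFReal α v x
      = σ * ∫ x, stdGaussianCDF ((σ * x) / σ) ^ n * gaussianPDFReal α v (σ * x) := by
    rw [hcov, ← mul_assoc, mul_inv_cancel₀ hσ.ne', one_mul]
  rw [this, ← integral_const_mul]
  simp only [Nat.add_sub_cancel]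
  refine integral_congr_ae (ae_of_all _ fun z => ?_)
  show σ * (stdGaussianCDF (σ * z / σ) ^ n * gaussianPDFReal α v (σ * z))
      = stdGaussianPDF (z - α / σ) * stdGaussianCDF z ^ n
  rw [mul_div_cancel_left₀ _ hσ.ne']
  rw [show σ * (stdGaussianCDF z ^ n * gaussianPDFReal α v (σ * z))
      = (σ * gaussianPDFReal α v (σ * z)) * stdGaussianCDF z ^ n by ring]
  rw [hvdef, hσdef, pdf_scale hα0 hα1 z]
end

section
/- (Rao–Blackwellized NELBO identity.) Fix an integer K ≥ 2, α ∈ (0, 1), indices m, i : Fin K, and a vector x_θ ∈ ℝ^K with strictly positive entries. Let x = e_m and z = e_i be one-hot vectors, and define x̄ = K·α·x + (1−α)·𝟙, x̄_θ = K·α·x_θ + (1−α)·𝟙, and κ = (1−α)/(K·α + 1 − α). Then ∑_{j : Fin K} (x̄_j / x̄_i) · log( (x̄_θ)_i · x̄_j / ((x̄_θ)_j · x̄_i) ) = ( κ·[i = m] + [i ≠ m] ) · ∑_{j : Fin K} log( (x̄_θ)_i / (x̄_θ)_j ) + (K·α/(1−α)) · [i ≠ m] · log( (x̄_θ)_i /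 (x̄_θ)_m ) + ( (K−1)·κ·[i = m] − (1/κ)·[i ≠ m] ) · log κ, where [P] denotes 1 if P holds and 0 otherwise. Consequently the NELBO integrand f of Eq. (6) equals the Rao–Blackwellized integrand f_DUO of Eq. (16). -/
/-- **Rao–Blackwellized NELBO identity.**  For `K ≥ 2`, `α ∈ (0,1)`, indices `m i`, and a
strictly positive vector `x_θ`, with `x̄ = Kα e_m + (1-α)𝟙`, `x̄_θ = Kα x_θ + (1-α)𝟙`
and `κ = (1-α)/(Kα + 1 - α)`, the cross-entropy-like sum
`∑ j (x̄_j/x̄_i) log(x̄θ_i x̄_j / (x̄θ_j x̄_i))` equals its Rao–Blackwellized form. -/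
theorem rao_blackwellized_nelbo_identity (K : ℕ) (hK : 2 ≤ K)
    (α : ℝ) (hα0 : 0 < α) (hα1 : α < 1) (m i : Fin K)
    (xθ : Fin K → ℝ) (hxθ : ∀ j, 0 < xθ j)
    (xbar xbarθ : Fin K → ℝ) (κ : ℝ)
    (hxbar : xbar = fun j => (K : ℝ) * α * (if j = m then 1 else 0) + (1 - α))
    (hxbarθ : xbarθ = fun j => (K : ℝ) * α * xθ j + (1 - α))
    (hκ : κ = (1 - α) / ((K : ℝ) * α + 1 - α)) :
    ∑ j, (xbar j / xbar i) * Real.log ((xbarθ i * xbar j) / (xbarθ j * xbar i))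
      = (κ * (if i = m then 1 else 0) + (if i = m then 0 else 1))
            * ∑ j, Real.log (xbarθ i / xbarθ j)
        + ((K : ℝ) * α / (1 - α)) * (if i = m then 0 else 1)
            * Real.log (xbarθ i / xbarθ m)
        + (((K : ℝ) - 1) * κ * (if i = m then 1 else 0)
            - (1 / κ) * (if i = m then 0 else 1)) * Real.log κ := by
  have hKpos : (0:ℝ) < K := by
    have : (2:ℝ) ≤ K := by exact_mod_cast hK
    linarith
  have h1α : (0:ℝ) < 1 - α := by linarith
  have hKα : (0:ℝ) < (K:ℝ) * α := mul_pos hKpos hα0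
  have hS : (0:ℝ) < (K:ℝ) * α + 1 - α := by linarith
  have hκpos : 0 < κ := hκ ▸ div_pos h1α hS
  have hθ : ∀ j, 0 < xbarθ j := by
    intro j
    rw [hxbarθ]
    have := mul_pos hKα (hxθ j)
    dsimp only
    linarith
  have hxbm : xbar m = (K:ℝ) * α + 1 - α := by rw [hxbar]; simp; ring
  have hxbne : ∀ j, j ≠ m → xbar j = 1 - α := by
    intro j hj; rw [hxbar]; simp [hj]
  have hκ' : κ = (1 - α) / ((K:ℝ) * α + (1 - α)) := by rw [hκ]; ring_nf
  rcases eq_or_ne i m with h | h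
  · subst h
    have key : ∀ j : Fin K,
        (xbar j / xbar i) * Real.log ((xbarθ i * xbar j) / (xbarθ j * xbar i))
          = κ * Real.log (xbarθ i / xbarθ j)
            + (if j = i then 0 else κ * Real.log κ) := by
      intro j
      by_cases hj : j = i
      · subst hj
        rw [if_pos rfl, div_self (ne_of_gt (hxbm ▸ hS)),
          div_self (ne_of_gt (mul_pos (hθ j) (hxbm ▸ hS))),
          div_self (ne_of_gt (hθ j)), Real.log_one]
        ring
      · rw [if_neg hj, hxbne j hj, hxbm]
        have hratio : xbarθ i * (1 - α) / (xbarθ j * ((K:ℝ) * α + 1 - α))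
            = (xbarθ i / xbarθ j) * κ := by
          rw [hκ]
          field_simp
          try ring
        rw [hratio, Real.log_mul (ne_of_gt (div_pos (hθ i) (hθ j))) (ne_of_gt hκpos)]
        have hq : (1 - α) / ((K:ℝ) * α + 1 - α) = κ := hκ.symm
        rw [hq]
        ring
    rw [Finset.sum_congr rfl (fun j _ => key j), Finset.sum_add_distrib, ← Finset.mul_sum]
    have hsum : ∑ j : Fin K, (if j = i then (0:ℝ) else κ * Real.log κ)
        = ((K:ℝ) - 1) * (κ * Real.log κ) := by
      have h2 : ∀ j : Fin K, (if j = i then (0:ℝ) else κ * Real.log κ)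
          = κ * Real.log κ - (if j = i then κ * Real.log κ else 0) := by
        intro j; split <;> ring
      rw [Finset.sum_congr rfl (fun j _ => h2 j), Finset.sum_sub_distrib,
        Finset.sum_const, Finset.sum_ite_eq' Finset.univ i (fun _ => κ * Real.log κ),
        if_pos (Finset.mem_univ i), Finset.card_univ, Fintype.card_fin, nsmul_eq_mul]
      ring
    rw [hsum]
    simp only [eq_self_iff_true, if_true]
    ring
  · have key : ∀ j : Fin K,
        (xbar j / xbar i) * Real.log ((xbarθ i * xbar j) / (xbarθ j * xbar i))
          = Real.log (xbarθ i / xbarθ j)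
            + (if j = m then
                ((K:ℝ) * α / (1 - α)) * Real.log (xbarθ i / xbarθ m)
                  - (1 / κ) * Real.log κ
              else 0) := by
      intro j
      rw [hxbne i h]
      by_cases hj : j = m
      · subst hj
        rw [if_pos rfl, hxbm]
        have hratio : xbarθ i * ((K:ℝ) * α + 1 - α) / (xbarθ j * (1 - α))
            = (xbarθ i / xbarθ j) / κ := by
          rw [hκ]
          field_simp
          try ring
        rw [hratio, Real.log_div (ne_of_gt (div_pos (hθ i) (hθ j))) (ne_of_gt hκpos)]
        have hk1 : ((K:ℝ) * α + 1 - α) / (1 - α) = 1 / κ := by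
          rw [hκ]
          field_simp
        rw [hk1]
        have hk2 : (K:ℝ) * α / (1 - α) = 1 / κ - 1 := by
          rw [hκ]
          field_simp
          try ring
        rw [hk2]
        ring
      · rw [if_neg hj, hxbne j hj,
          div_self (ne_of_gt h1α), one_mul,
          mul_div_mul_right _ _ (ne_of_gt h1α)]
        ring
    rw [Finset.sum_congr rfl (fun j _ => key j), Finset.sum_add_distrib,
      Finset.sum_ite_eq' Finset.univ m
        (fun _ => ((K:ℝ) * α / (1 - α)) * Real.log (xbarθ i / xbarθ m)
          - (1 / κ) * Real.log κ),
      if_pos (Finset.mem_univ m)]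
    simp only [if_neg h]
    ring
end

section
/- Fix an integer K ≥ 2, a mean vector μ ∈ ℝ^K, σ > 0, and two indices i, j : Fin K. Let ν = N(μ, σ² I_K) be the product Gaussian measure on ℝ^K with mean vector μ and coordinate variance σ². Then ν({w | ∀ l ≠ i, w l < w i}) = ν({w | ∀ l ≠ j, w l < w j}) if and only if μ_i = μ_j; i.e., the probabilities that the maximum is attained at index i and at index j coincide exactly when the corresponding means coincide. -/
open MeasureTheory ProbabilityTheory
open scoped NNReal

section Aux

variable {K : ℕ}

lemma gaussAux_measurableSet (i : Fin K) :
    MeasurableSet {w : Fin K → ℝ | ∀ l ≠ i, w l < w i} := by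
  have : {w : Fin K → ℝ | ∀ l ≠ i, w l < w i}
      = ⋂ l, ⋂ (_ : l ≠ i), {w : Fin K → ℝ | w l < w i} := by
    ext w; simp
  rw [this]
  exact MeasurableSet.iInter fun l => MeasurableSet.iInter fun _ =>
    measurableSet_lt (measurable_pi_apply l) (measurable_pi_apply i)

/-- Swapping coordinates `i` and `j` turns the "argmax at `j`" probability for means `μ`
into the "argmax at `i`" probability for the swapped means. -/
lemma gaussAux_swap (μ : Fin K → ℝ) (v : ℝ≥0) (i j : Fin K) :
    Measure.pi (fun l => gaussianReal (μ l) v) {w | ∀ l ≠ j, w l < w j}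
      = Measure.pi (fun l => gaussianReal (μ (Equiv.swap i j l)) v)
          {w | ∀ l ≠ i, w l < w i} := by
  have hmp := measurePreserving_piCongrLeft
    (fun l : Fin K => gaussianReal (μ l) v) (Equiv.swap i j)
  have happ : ∀ (x : Fin K → ℝ) (a : Fin K),
      (MeasurableEquiv.piCongrLeft (fun _ => ℝ) (Equiv.swap i j)) x a
        = x (Equiv.swap i j a) := by
    intro x a
    have := MeasurableEquiv.piCongrLeft_apply_apply (Equiv.swap i j)
      (β := fun _ => ℝ) x (Equiv.swap i j a)
    rwa [Equiv.swap_apply_self] at this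
  have hpre : (MeasurableEquiv.piCongrLeft (fun _ => ℝ) (Equiv.swap i j)) ⁻¹'
      {w : Fin K → ℝ | ∀ l ≠ j, w l < w j} = {w : Fin K → ℝ | ∀ l ≠ i, w l < w i} := by
    ext x
    simp only [Set.mem_preimage, Set.mem_setOf_eq, happ, Equiv.swap_apply_right]
    constructor
    · intro h m hm
      have := h (Equiv.swap i j m) (by
        intro hc
        apply hm
        have := congrArg (Equiv.swap i j) hc
        rwa [Equiv.swap_apply_self, Equiv.swap_apply_right] at this)
      rwa [Equiv.swap_apply_self] at this
    · intro h l hl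
      exact h (Equiv.swap i j l) (by
        intro hc
        apply hl
        have := congrArg (Equiv.swap i j) hc
        rwa [Equiv.swap_apply_self, Equiv.swap_apply_left] at this)
  calc Measure.pi (fun l => gaussianReal (μ l) v) {w | ∀ l ≠ j, w l < w j}
      = Measure.pi (fun l => gaussianReal (μ (Equiv.swap i j l)) v)
          ((MeasurableEquiv.piCongrLeft (fun _ => ℝ) (Equiv.swap i j)) ⁻¹'
            {w : Fin K → ℝ | ∀ l ≠ j, w l < w j}) := by
        rw [← hmp.measure_preimage (gaussAux_measurableSet j).nullMeasurableSet]
    _ = _ := by rw [hpre]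

lemma gaussAux_shift (μ μ' : Fin K → ℝ) (v : ℝ≥0) :
    MeasurePreserving (fun (w : Fin K → ℝ) l => w l + (μ' l - μ l))
      (Measure.pi fun l => gaussianReal (μ l) v)
      (Measure.pi fun l => gaussianReal (μ' l) v) := by
  refine measurePreserving_pi _ _ fun l => ⟨measurable_add_const _, ?_⟩
  rw [gaussianReal_map_add_const]
  congr 1
  ring

/-- Strict monotonicity: if `μ i < μ j` then the argmax probability at `i` is strictly
smaller than at `j`. -/
lemma gaussAux_key (μ : Fin K → ℝ) (v : ℝ≥0) (hv : v ≠ 0) {i j : Fin K} (hij : i ≠ j)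
    (h : μ i < μ j) :
    Measure.pi (fun l => gaussianReal (μ l) v) {w | ∀ l ≠ i, w l < w i}
      < Measure.pi (fun l => gaussianReal (μ l) v) {w | ∀ l ≠ j, w l < w j} := by
  classical
  set ν := Measure.pi (fun l : Fin K => gaussianReal (μ l) v) with hν
  set μ' : Fin K → ℝ := fun l => μ (Equiv.swap i j l) with hμ'
  set δ : ℝ := μ j - μ i with hδ
  have hδpos : 0 < δ := sub_pos.mpr h
  -- rewrite RHS via swap
  rw [gaussAux_swap μ v i j]
  -- rewrite via shift
  have hshift := gaussAux_shift μ μ' v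
  have hRHS : Measure.pi (fun l => gaussianReal (μ (Equiv.swap i j l)) v)
      {w : Fin K → ℝ | ∀ l ≠ i, w l < w i}
      = ν ((fun (w : Fin K → ℝ) l => w l + (μ' l - μ l)) ⁻¹'
          {w : Fin K → ℝ | ∀ l ≠ i, w l < w i}) :=
    (hshift.measure_preimage (gaussAux_measurableSet i).nullMeasurableSet).symm
  rw [hRHS]
  set B := (fun (w : Fin K → ℝ) l => w l + (μ' l - μ l)) ⁻¹'
      {w : Fin K → ℝ | ∀ l ≠ i, w l < w i} with hB
  have hdi : μ' i - μ i = δ := by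
    simp [hμ', hδ, Equiv.swap_apply_left]
  have hdj : μ' j - μ j = -δ := by
    simp [hμ', hδ, Equiv.swap_apply_right]
  have hdo : ∀ l, l ≠ i → l ≠ j → μ' l - μ l = 0 := by
    intro l hli hlj
    simp [hμ', Equiv.swap_apply_of_ne_of_ne hli hlj]
  -- the rectangle
  set r : Fin K → Set ℝ := fun l =>
    if l = i then Set.Ioo 0 δ else if l = j then Set.Ioo δ (2*δ) else Set.Ioo (-1) 0 with hr
  set R : Set (Fin K → ℝ) := Set.univ.pi r with hR
  have hRmem : ∀ w ∈ R, w i ∈ Set.Ioo 0 δ ∧ w j ∈ Set.Ioo δ (2*δ) ∧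
      ∀ l, l ≠ i → l ≠ j → w l ∈ Set.Ioo (-1 : ℝ) 0 := by
    intro w hw
    refine ⟨?_, ?_, ?_⟩
    · have := hw i (Set.mem_univ i); simpa [hr] using this
    · have := hw j (Set.mem_univ j); simpa [hr, hij.symm] using this
    · intro l hli hlj
      have := hw l (Set.mem_univ l); simpa [hr, hli, hlj] using this
  -- A ∪ R ⊆ B
  have hAB : {w : Fin K → ℝ | ∀ l ≠ i, w l < w i} ⊆ B := by
    intro w hw
    intro l hl
    simp only [Set.mem_setOf_eq] at hw ⊢
    rw [hdi]
    by_cases hlj : l = j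
    · subst hlj
      rw [hdj]
      have := hw l hl
      linarith
    · rw [hdo l hl hlj]
      have := hw l hl
      linarith
  have hRB : R ⊆ B := by
    intro w hw
    obtain ⟨hwi, hwj, hwo⟩ := hRmem w hw
    intro l hl
    simp only [Set.mem_setOf_eq]
    rw [hdi]
    by_cases hlj : l = j
    · subst hlj
      rw [hdj]
      obtain ⟨h1, h2⟩ := hwj
      obtain ⟨h3, h4⟩ := hwi
      linarith
    · rw [hdo l hl hlj]
      obtain ⟨h1, h2⟩ := hwo l hl hlj
      obtain ⟨h3, h4⟩ := hwi
      linarith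
  -- disjointness
  have hdisj : Disjoint {w : Fin K → ℝ | ∀ l ≠ i, w l < w i} R := by
    rw [Set.disjoint_left]
    intro w hw hwR
    obtain ⟨hwi, hwj, _⟩ := hRmem w hwR
    have := hw j hij.symm
    obtain ⟨h1, h2⟩ := hwj
    obtain ⟨h3, h4⟩ := hwi
    linarith
  -- positivity of ν R
  have hRpos : 0 < ν R := by
    rw [hR, hν, Measure.pi_pi]
    refine CanonicallyOrderedAdd.prod_pos.mpr fun l _ => ?_
    have hopen : ∃ a b : ℝ, a < b ∧ r l = Set.Ioo a b := by
      by_cases hli : l = i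
      · exact ⟨0, δ, hδpos, by simp [hr, hli]⟩
      · by_cases hlj : l = j
        · exact ⟨δ, 2*δ, by linarith, by simp [hr, hli, hlj, Ne.symm hij]⟩
        · exact ⟨-1, 0, by norm_num, by simp [hr, hli, hlj]⟩
    obtain ⟨a, b, hab, hrl⟩ := hopen
    rw [hrl]
    rw [pos_iff_ne_zero]
    intro hzero
    have := (gaussianReal_absolutelyContinuous' (μ l) hv) hzero
    rw [Real.volume_Ioo] at this
    exact (ENNReal.ofReal_pos.mpr (by linarith)).ne' this
  -- conclude
  have hAmeas := gaussAux_measurableSet (K := K) i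
  have hRmeas : MeasurableSet R := MeasurableSet.univ_pi fun l => by
    rw [hr]; dsimp only; split_ifs <;> exact measurableSet_Ioo
  have hunion : ν ({w : Fin K → ℝ | ∀ l ≠ i, w l < w i} ∪ R)
      = ν {w : Fin K → ℝ | ∀ l ≠ i, w l < w i} + ν R :=
    measure_union hdisj hRmeas
  have hfin : ν {w : Fin K → ℝ | ∀ l ≠ i, w l < w i} ≠ ⊤ := by
    have : IsProbabilityMeasure ν := by
      rw [hν]; infer_instance
    exact measure_ne_top _ _
  calc ν {w : Fin K → ℝ | ∀ l ≠ i, w l < w i}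
      < ν {w : Fin K → ℝ | ∀ l ≠ i, w l < w i} + ν R :=
        ENNReal.lt_add_right hfin hRpos.ne'
    _ = ν ({w : Fin K → ℝ | ∀ l ≠ i, w l < w i} ∪ R) := hunion.symm
    _ ≤ ν B := measure_mono (Set.union_subset hAB hRB)

end Aux

/-- For the product Gaussian `N(μ, σ² I_K)`, the probabilities that the maximum is
attained (strictly) at index `i` and at index `j` coincide exactly when `μ_i = μ_j`. -/
theorem gaussian_argmax_prob_eq_iff_mean_eq (K : ℕ) (hK : 2 ≤ K) (μ : Fin K → ℝ)
    (σ : ℝ) (hσ : 0 < σ) (i j : Fin K) :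
    (Measure.pi fun l : Fin K => gaussianReal (μ l) (Real.toNNReal (σ ^ 2)))
          {w | ∀ l ≠ i, w l < w i}
        = (Measure.pi fun l : Fin K => gaussianReal (μ l) (Real.toNNReal (σ ^ 2)))
          {w | ∀ l ≠ j, w l < w j}
      ↔ μ i = μ j := by
  set v : ℝ≥0 := Real.toNNReal (σ ^ 2) with hvdef
  have hv : v ≠ 0 := by
    rw [hvdef]
    exact (Real.toNNReal_pos.mpr (by positivity)).ne'
  constructor
  · intro heq
    by_contra hne
    have hij : i ≠ j := fun hc => hne (by rw [hc])
    rcases lt_or_gt_of_ne hne with hlt | hgt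
    · exact absurd heq (gaussAux_key μ v hv hij hlt).ne
    · exact absurd heq.symm (gaussAux_key μ v hv hij.symm hgt).ne
  · intro heq
    rw [gaussAux_swap μ v i j]
    have : (fun l => μ (Equiv.swap i j l)) = μ := by
      funext l
      rcases eq_or_ne l i with rfl | hli
      · rw [Equiv.swap_apply_left, heq]
      · rcases eq_or_ne l j with rfl | hlj
        · rw [Equiv.swap_apply_right, heq]
        · rw [Equiv.swap_apply_of_ne_of_ne hli hlj]
    have h2 : (fun l => gaussianReal (μ (Equiv.swap i j l)) v)
        = fun l => gaussianReal (μ l) v := funext fun l => by rw [congrFun this l]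
    rw [h2]
end

section
/- Fix an integer K ≥ 2, an index k : Fin K, and a vector ε ∈ ℝ^K with pairwise distinct entries. For a ∈ (0, 1), let v(a) = a·e_k + √(1 − a²)·ε ∈ ℝ^K, and note v(a) has a unique maximizing index. Then for every a ∈ (0, 1), the maximizing index of v(a) is either k or the (unique) index j* maximizing ε over {j : j ≠ k}; in particular, along a deterministic discrete trajectory a ↦ argmax(a·e_k + √(1−a²)·ε) the token takes at most two values. -/
/-- The one-hot vector `e_k ∈ ℝ^K`. -/
def oneHot {K : ℕ} (k : Fin K) : Fin K → ℝ := fun j => if j = k then 1 else 0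

/-- Along the deterministic discrete trajectory `a ↦ argmax(a e_k + √(1-a²) ε)` with
`ε` having pairwise distinct entries, the maximizing index is always `k` or the unique
index `j*` maximizing `ε` over `{j ≠ k}`; so the token takes at most two values. -/
theorem ddt_at_most_two_values (K : ℕ) (hK : 2 ≤ K) (k : Fin K) (ε : Fin K → ℝ)
    (hε : Function.Injective ε) (jstar : Fin K) (hjk : jstar ≠ k)
    (hjmax : ∀ j, j ≠ k → j ≠ jstar → ε j < ε jstar) :
    ∀ a : ℝ, 0 < a → a < 1 → ∀ i : Fin K,
      (∀ j ≠ i, a * oneHot k j + Real.sqrt (1 - a ^ 2) * ε j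
          < a * oneHot k i + Real.sqrt (1 - a ^ 2) * ε i) →
      i = k ∨ i = jstar := by
  intro a ha0 ha1 i hmax
  by_contra h
  push_neg at h
  obtain ⟨hik, hij⟩ := h
  have hlt := hmax jstar (fun hh => hij hh.symm)
  have hs : 0 < Real.sqrt (1 - a ^ 2) := by
    apply Real.sqrt_pos.mpr
    nlinarith
  simp only [oneHot, if_neg hik, if_neg hjk] at hlt
  rw [mul_zero, zero_add, zero_add] at hlt
  have : ε jstar < ε i := (mul_lt_mul_iff_right₀ hs).mp hlt
  exact absurd (hjmax i hik hij) (not_lt.mpr this.le)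
end

section
/- Fix an integer K ≥ 2, an index k : Fin K, and a vector ε ∈ ℝ^K with pairwise distinct entries. For a ∈ (0, 1), let v(a) = a·e_k + √(1 − a²)·ε ∈ ℝ^K. If for some a₁ ∈ (0, 1) the maximum of v(a₁) is attained uniquely at index k (i.e., v(a₁)_j < v(a₁)_k for all j ≠ k), then for every a₂ ∈ (0, 1) with a₂ ≥ a₁ the maximum of v(a₂) is also attained uniquely at k. Equivalently, once a token flips away from k as a decreases along the deterministic discrete trajectory, it never flips back. -/
/-- Along the deterministic discrete trajectory `a ↦ argmax(a e_k + √(1-a²) ε)`, if the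
maximum is attained uniquely at `k` for some `a₁ ∈ (0,1)`, it is also attained uniquely
at `k` for every `a₂ ∈ (0,1)` with `a₂ ≥ a₁`: once a token flips away from `k` as `a`
decreases, it never flips back. -/
theorem ddt_no_flip_back (K : ℕ) (hK : 2 ≤ K) (k : Fin K) (ε : Fin K → ℝ)
    (hε : Function.Injective ε) (a₁ a₂ : ℝ) (ha₁0 : 0 < a₁) (ha₁1 : a₁ < 1)
    (ha₂0 : 0 < a₂) (ha₂1 : a₂ < 1) (h12 : a₁ ≤ a₂)
    (hmax : ∀ j ≠ k, a₁ * oneHot k j + Real.sqrt (1 - a₁ ^ 2) * ε j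
        < a₁ * oneHot k k + Real.sqrt (1 - a₁ ^ 2) * ε k) :
    ∀ j ≠ k, a₂ * oneHot k j + Real.sqrt (1 - a₂ ^ 2) * ε j
        < a₂ * oneHot k k + Real.sqrt (1 - a₂ ^ 2) * ε k := by
  intro j hj
  have h1 := hmax j hj
  simp only [oneHot, if_pos rfl, if_neg hj, if_true, mul_zero, mul_one, zero_add] at h1 ⊢
  -- h1 : √(1-a₁²) * ε j < a₁ + √(1-a₁²) * ε k
  have h1' : Real.sqrt (1 - a₁ ^ 2) * (ε j - ε k) < a₁ := by nlinarith [h1]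
  have hs2 : (0:ℝ) ≤ Real.sqrt (1 - a₂ ^ 2) := Real.sqrt_nonneg _
  have key : Real.sqrt (1 - a₂ ^ 2) * (ε j - ε k) < a₂ := by
    rcases le_or_gt (ε j - ε k) 0 with hd | hd
    · calc Real.sqrt (1 - a₂ ^ 2) * (ε j - ε k) ≤ 0 := mul_nonpos_of_nonneg_of_nonpos hs2 hd
        _ < a₂ := ha₂0
    · have hmono : Real.sqrt (1 - a₂ ^ 2) ≤ Real.sqrt (1 - a₁ ^ 2) := by
        apply Real.sqrt_le_sqrt; nlinarith
      calc Real.sqrt (1 - a₂ ^ 2) * (ε j - ε k)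
          ≤ Real.sqrt (1 - a₁ ^ 2) * (ε j - ε k) := by
            apply mul_le_mul_of_nonneg_right hmono hd.le
        _ < a₁ := h1'
        _ ≤ a₂ := h12
  linarith
end

section
/- (Discretized Gaussian transitions are not Uniform-state transitions.) Fix an integer K ≥ 3, a vector w ∈ ℝ^K with a unique maximizing index k, and a ∈ (0, 1). Suppose there exist indices i, j, both different from k, with w_i ≠ w_j. Let ν = N(a·w, (1 − a²) I_K) be the product Gaussian with mean a·w and coordinate variance 1 − a², and let A : ℝ^K → Fin K be the least-index argmax map. Then the pushforward A_* ν is not of the form Cat(α·e_k + (1−α)·𝟙/K) for any α ∈ [0,1]; i.e., (A_* ν)({i}) ≠ (A_* ν)({j}), so the argmax pushforward of the Gaussian transition kernel started at w differs from every Uniform-state discrete diffusion transition kernel started at A(w). -/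
open MeasureTheory ProbabilityTheory
open scoped ENNReal NNReal Real

/-- The least index attaining the maximum of `w : Fin K → ℝ`. -/
noncomputable def argmaxIdx {K : ℕ} [NeZero K] (w : Fin K → ℝ) : Fin K :=
  (Finset.univ.filter fun i => ∀ j, w j ≤ w i).min' (by
    obtain ⟨i, -, hi⟩ :=
      Finset.exists_max_image (Finset.univ : Finset (Fin K)) w Finset.univ_nonempty
    exact ⟨i, Finset.mem_filter.mpr ⟨Finset.mem_univ i, fun j => hi j (Finset.mem_univ j)⟩⟩)

section Argmax

variable {K : ℕ} [NeZero K]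

lemma argmaxIdx_mem (x : Fin K → ℝ) :
    argmaxIdx x ∈ Finset.univ.filter fun i => ∀ j, x j ≤ x i :=
  Finset.min'_mem _ _

lemma le_argmaxIdx (x : Fin K → ℝ) (l : Fin K) : x l ≤ x (argmaxIdx x) := by
  have h := argmaxIdx_mem x
  rw [Finset.mem_filter] at h
  exact h.2 l

lemma argmaxIdx_eq_of_strict {x : Fin K → ℝ} {m : Fin K} (h : ∀ l, l ≠ m → x l < x m) :
    argmaxIdx x = m := by
  have hfil : (Finset.univ.filter fun i => ∀ j, x j ≤ x i) = {m} := by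
    ext l
    simp only [Finset.mem_filter, Finset.mem_univ, true_and, Finset.mem_singleton]
    constructor
    · intro hl
      by_contra hne
      exact absurd (hl m) (not_le.mpr (h l hne))
    · rintro rfl l'
      rcases eq_or_ne l' l with rfl | hl
      · exact le_rfl
      · exact (h l' hl).le
  have := argmaxIdx_mem x
  rw [hfil, Finset.mem_singleton] at this
  exact this

lemma argmaxIdx_eq_iff (x : Fin K → ℝ) (m : Fin K) :
    argmaxIdx x = m ↔ (∀ l, x l ≤ x m) ∧ ∀ m', m' < m → ¬ (∀ l, x l ≤ x m') := by
  constructor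
  · rintro rfl
    refine ⟨le_argmaxIdx x, fun m' hm' hall => ?_⟩
    have : argmaxIdx x ≤ m' :=
      Finset.min'_le _ _ (Finset.mem_filter.mpr ⟨Finset.mem_univ _, hall⟩)
    exact absurd hm' (not_lt.mpr this)
  · rintro ⟨h1, h2⟩
    have hmem : m ∈ Finset.univ.filter fun i => ∀ j, x j ≤ x i :=
      Finset.mem_filter.mpr ⟨Finset.mem_univ _, h1⟩
    have hle : argmaxIdx x ≤ m := Finset.min'_le _ _ hmem
    rcases lt_or_eq_of_le hle with hlt | heq
    · have := argmaxIdx_mem x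
      rw [Finset.mem_filter] at this
      exact absurd this.2 (h2 _ hlt)
    · exact heq

lemma measurable_argmaxIdx : Measurable (argmaxIdx : (Fin K → ℝ) → Fin K) := by
  apply measurable_to_countable'
  intro m
  have hA : ∀ m' : Fin K, MeasurableSet {x : Fin K → ℝ | ∀ l, x l ≤ x m'} := by
    intro m'
    have : {x : Fin K → ℝ | ∀ l, x l ≤ x m'} = ⋂ l, {x : Fin K → ℝ | x l ≤ x m'} := by
      ext y; simp
    rw [this]
    exact MeasurableSet.iInter fun l =>
      measurableSet_le (measurable_pi_apply l) (measurable_pi_apply m')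
  have : (argmaxIdx : (Fin K → ℝ) → Fin K) ⁻¹' {m} =
      {x : Fin K → ℝ | ∀ l, x l ≤ x m} ∩
        ⋂ (m' : Fin K) (_ : m' < m), {x : Fin K → ℝ | ∀ l, x l ≤ x m'}ᶜ := by
    ext x
    simp only [Set.mem_preimage, Set.mem_singleton_iff, Set.mem_inter_iff, Set.mem_iInter,
      Set.mem_compl_iff, Set.mem_setOf_eq, argmaxIdx_eq_iff]
  rw [this]
  exact (hA m).inter (MeasurableSet.iInter fun m' => MeasurableSet.iInter fun _ => (hA m').compl)

end Argmax

section Ties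

variable {K : ℕ} [NeZero K]

lemma noAtoms_gaussianReal {m : ℝ} {v : ℝ≥0} (hv : v ≠ 0) : NullSingletonClass (gaussianReal m v) := by
  constructor
  intro t
  rw [gaussianReal_apply _ hv]
  exact setLIntegral_measure_zero _ _ (measure_singleton t)

lemma pi_measure_eq_coords_null {γ : Fin K → Measure ℝ} [∀ l, SigmaFinite (γ l)]
    [∀ l, NullSingletonClass (γ l)] {p q : Fin K} (hpq : p ≠ q) :
    Measure.pi γ {x | x p = x q} = 0 := by
  classical
  have hS : MeasurableSet {x : Fin K → ℝ | x p = x q} :=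
    measurableSet_eq_fun (measurable_pi_apply p) (measurable_pi_apply q)
  have hf : Measurable ({x : Fin K → ℝ | x p = x q}.indicator (1 : (Fin K → ℝ) → ℝ≥0∞)) :=
    measurable_one.indicator hS
  rw [← lintegral_indicator_one hS, lintegral_eq_lmarginal_univ (fun _ => (0 : ℝ)),
    lmarginal_erase' _ hf (Finset.mem_univ p)]
  have hz : (fun x : Fin K → ℝ =>
      ∫⁻ t, ({x : Fin K → ℝ | x p = x q}.indicator 1) (Function.update x p t) ∂γ p)
      = fun _ => 0 := by
    funext x
    have h1 : ∀ t : ℝ, ({x : Fin K → ℝ | x p = x q}.indicator (1 : (Fin K → ℝ) → ℝ≥0∞))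
        (Function.update x p t) = ({x q} : Set ℝ).indicator 1 t := by
      intro t
      have hqp : q ≠ p := hpq.symm
      simp [Set.indicator_apply, Set.mem_setOf_eq, Function.update_of_ne hqp]
    simp_rw [h1]
    rw [lintegral_indicator_one (measurableSet_singleton _)]
    exact measure_singleton _
  rw [hz]
  simp [lmarginal]

end Ties

section ProdDensity

variable {K : ℕ} [NeZero K]

lemma lintegral_pi_prod (γ : Fin K → Measure ℝ) [∀ l, SigmaFinite (γ l)]
    (g : Fin K → ℝ → ℝ≥0∞) (hg : ∀ l, Measurable (g l)) :
    ∫⁻ x, ∏ l, g l (x l) ∂Measure.pi γ = ∏ l, ∫⁻ t, g l t ∂γ l := by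
  classical
  have key : ∀ s : Finset (Fin K), ∀ x : Fin K → ℝ,
      (∫⋯∫⁻_s, (fun y => ∏ l ∈ s, g l (y l)) ∂γ) x = ∏ l ∈ s, ∫⁻ t, g l t ∂γ l := by
    intro s
    induction s using Finset.induction_on with
    | empty => intro x; simp
    | @insert p s hp ih =>
      intro x
      have hmeas : Measurable fun y : Fin K → ℝ => ∏ l ∈ insert p s, g l (y l) :=
        Finset.measurable_prod _ fun l _ => (hg l).comp (measurable_pi_apply l)
      rw [lmarginal_insert' _ hmeas hp]
      have hinner : (fun y : Fin K → ℝ =>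
          ∫⁻ t, ∏ l ∈ insert p s, g l (Function.update y p t l) ∂γ p)
          = fun y => (∏ l ∈ s, g l (y l)) * ∫⁻ t, g p t ∂γ p := by
        funext y
        have hpt : ∀ t : ℝ, ∏ l ∈ insert p s, g l (Function.update y p t l)
            = (∏ l ∈ s, g l (y l)) * g p t := by
          intro t
          rw [Finset.prod_insert hp, Function.update_self, mul_comm]
          congr 1
          exact Finset.prod_congr rfl fun l hl => by
            rw [Function.update_of_ne (ne_of_mem_of_not_mem hl hp)]
        simp_rw [hpt]
        rw [lintegral_const_mul _ (hg p)]
      rw [hinner]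
      have hmeas2 : Measurable fun y : Fin K → ℝ => ∏ l ∈ s, g l (y l) :=
        Finset.measurable_prod _ fun l _ => (hg l).comp (measurable_pi_apply l)
      have : (∫⋯∫⁻_s, (fun y => (∏ l ∈ s, g l (y l)) * ∫⁻ t, g p t ∂γ p) ∂γ) x
          = (∫⋯∫⁻_s, (fun y => ∏ l ∈ s, g l (y l)) ∂γ) x * ∫⁻ t, g p t ∂γ p := by
        simp only [lmarginal]
        rw [lintegral_mul_const]
        exact hmeas2.comp measurable_updateFinset
      rw [this, ih x, Finset.prod_insert hp, mul_comm]
  have := key Finset.univ (fun _ => 0)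
  rw [← this, lintegral_eq_lmarginal_univ (fun _ => (0 : ℝ))]

lemma pi_gaussian_withDensity (m : Fin K → ℝ) {v : ℝ≥0} (hv : v ≠ 0) :
    Measure.pi (fun l => gaussianReal (m l) v)
      = (Measure.pi fun _ : Fin K => (volume : Measure ℝ)).withDensity
          (fun x => ∏ l, gaussianPDF (m l) v (x l)) := by
  refine Measure.pi_eq fun s hs => ?_
  rw [withDensity_apply _ (MeasurableSet.univ_pi hs)]
  have h1 : ∫⁻ x in Set.pi Set.univ s, ∏ l, gaussianPDF (m l) v (x l)
        ∂(Measure.pi fun _ : Fin K => (volume : Measure ℝ))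
      = ∫⁻ x, ∏ l, (s l).indicator (gaussianPDF (m l) v) (x l)
        ∂(Measure.pi fun _ : Fin K => (volume : Measure ℝ)) := by
    rw [← lintegral_indicator (MeasurableSet.univ_pi hs)]
    congr 1
    funext x
    by_cases hx : x ∈ Set.pi Set.univ s
    · rw [Set.indicator_of_mem hx]
      exact Finset.prod_congr rfl fun l _ =>
        (Set.indicator_of_mem (hx l (Set.mem_univ l)) _).symm
    · rw [Set.indicator_of_notMem hx]
      obtain ⟨l, hl⟩ : ∃ l, x l ∉ s l := by
        by_contra hcon
        push_neg at hcon
        exact hx fun l _ => hcon l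
      exact (Finset.prod_eq_zero (Finset.mem_univ l)
        (Set.indicator_of_notMem hl _)).symm
  rw [h1, lintegral_pi_prod _ _ (fun l => (measurable_gaussianPDF _ _).indicator (hs l))]
  exact Finset.prod_congr rfl fun l _ => by
    rw [lintegral_indicator (hs l), gaussianReal_apply _ hv]

end ProdDensity

section Core

variable {K : ℕ} [NeZero K]

lemma gaussianPDFReal_mul_le {v : ℝ≥0} (hv : v ≠ 0) {mi mj xi xj : ℝ}
    (hm : mj < mi) (hx : xj ≤ xi) :
    gaussianPDFReal mj v xi * gaussianPDFReal mi v xj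
      ≤ gaussianPDFReal mi v xi * gaussianPDFReal mj v xj := by
  have hvpos : (0 : ℝ) < (v : ℝ) := NNReal.coe_pos.mpr (pos_iff_ne_zero.mpr hv)
  simp only [gaussianPDFReal]
  have hc : (0 : ℝ) < (Real.sqrt (2 * Real.pi * v))⁻¹ := by positivity
  calc (Real.sqrt (2 * Real.pi * v))⁻¹ * Real.exp (-(xi - mj) ^ 2 / (2 * v))
        * ((Real.sqrt (2 * Real.pi * v))⁻¹ * Real.exp (-(xj - mi) ^ 2 / (2 * v)))
      = (Real.sqrt (2 * Real.pi * v))⁻¹ * (Real.sqrt (2 * Real.pi * v))⁻¹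
        * Real.exp (-(xi - mj) ^ 2 / (2 * v) + -(xj - mi) ^ 2 / (2 * v)) := by
        rw [Real.exp_add]; ring
    _ ≤ (Real.sqrt (2 * Real.pi * v))⁻¹ * (Real.sqrt (2 * Real.pi * v))⁻¹
        * Real.exp (-(xi - mi) ^ 2 / (2 * v) + -(xj - mj) ^ 2 / (2 * v)) := by
        apply mul_le_mul_of_nonneg_left _ (by positivity)
        apply Real.exp_le_exp.mpr
        rw [← add_div, ← add_div]
        rw [div_le_div_iff₀ (by positivity) (by positivity)]
        nlinarith [mul_nonneg (sub_nonneg.2 hx) (sub_nonneg.2 hm.le)]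
    _ = (Real.sqrt (2 * Real.pi * v))⁻¹ * Real.exp (-(xi - mi) ^ 2 / (2 * v))
        * ((Real.sqrt (2 * Real.pi * v))⁻¹ * Real.exp (-(xj - mj) ^ 2 / (2 * v))) := by
        rw [Real.exp_add]; ring

lemma gaussianPDFReal_mul_lt {v : ℝ≥0} (hv : v ≠ 0) {mi mj xi xj : ℝ}
    (hm : mj < mi) (hx : xj < xi) :
    gaussianPDFReal mj v xi * gaussianPDFReal mi v xj
      < gaussianPDFReal mi v xi * gaussianPDFReal mj v xj := by
  have hvpos : (0 : ℝ) < (v : ℝ) := NNReal.coe_pos.mpr (pos_iff_ne_zero.mpr hv)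
  simp only [gaussianPDFReal]
  calc (Real.sqrt (2 * Real.pi * v))⁻¹ * Real.exp (-(xi - mj) ^ 2 / (2 * v))
        * ((Real.sqrt (2 * Real.pi * v))⁻¹ * Real.exp (-(xj - mi) ^ 2 / (2 * v)))
      = (Real.sqrt (2 * Real.pi * v))⁻¹ * (Real.sqrt (2 * Real.pi * v))⁻¹
        * Real.exp (-(xi - mj) ^ 2 / (2 * v) + -(xj - mi) ^ 2 / (2 * v)) := by
        rw [Real.exp_add]; ring
    _ < (Real.sqrt (2 * Real.pi * v))⁻¹ * (Real.sqrt (2 * Real.pi * v))⁻¹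
        * Real.exp (-(xi - mi) ^ 2 / (2 * v) + -(xj - mj) ^ 2 / (2 * v)) := by
        apply mul_lt_mul_of_pos_left _ (by positivity)
        apply Real.exp_lt_exp.mpr
        rw [← add_div, ← add_div]
        rw [div_lt_div_iff₀ (by positivity) (by positivity)]
        nlinarith [mul_pos (sub_pos.2 hx) (sub_pos.2 hm)]
    _ = (Real.sqrt (2 * Real.pi * v))⁻¹ * Real.exp (-(xi - mi) ^ 2 / (2 * v))
        * ((Real.sqrt (2 * Real.pi * v))⁻¹ * Real.exp (-(xj - mj) ^ 2 / (2 * v))) := by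
        rw [Real.exp_add]; ring

lemma argmax_measure_lt (m : Fin K → ℝ) {v : ℝ≥0} (hv : v ≠ 0) (i j : Fin K)
    (hij : i ≠ j) (hm : m j < m i) :
    Measure.pi (fun l => gaussianReal (m l) v) (argmaxIdx ⁻¹' {j})
      < Measure.pi (fun l => gaussianReal (m l) v) (argmaxIdx ⁻¹' {i}) := by
  classical
  haveI : ∀ m0 : ℝ, NullSingletonClass (gaussianReal m0 v) := fun m0 => _root_.noAtoms_gaussianReal hv
  set e : Equiv.Perm (Fin K) := Equiv.swap i j with he
  set ν : Measure (Fin K → ℝ) := Measure.pi (fun l => gaussianReal (m l) v) with hν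
  set ν' : Measure (Fin K → ℝ) := Measure.pi (fun l => gaussianReal (m (e l)) v) with hν'
  have hEi : MeasurableSet ((argmaxIdx : (Fin K → ℝ) → Fin K) ⁻¹' {i}) :=
    measurable_argmaxIdx (measurableSet_singleton i)
  have hEj : MeasurableSet ((argmaxIdx : (Fin K → ℝ) → Fin K) ⁻¹' {j}) :=
    measurable_argmaxIdx (measurableSet_singleton j)
  have hsymm : e.symm = e := Equiv.symm_swap i j
  -- Step A : ν {argmax = j} = ν' {argmax = i}
  have hMP : MeasurePreserving (MeasurableEquiv.piCongrLeft (fun _ : Fin K => ℝ) e) ν' ν :=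
    measurePreserving_piCongrLeft (fun l => gaussianReal (m l) v) e
  have hT : ∀ x : Fin K → ℝ, (MeasurableEquiv.piCongrLeft (fun _ : Fin K => ℝ) e) x = x ∘ ⇑e := by
    intro x
    funext l
    have h1 := MeasurableEquiv.piCongrLeft_apply_apply (β := fun _ : Fin K => ℝ) e x (e.symm l)
    rw [Equiv.apply_symm_apply] at h1
    rw [h1, hsymm]
    rfl
  have hpre : ν (argmaxIdx ⁻¹' {j})
      = ν' {x : Fin K → ℝ | argmaxIdx (x ∘ ⇑e) = j} := by
    rw [← hMP.measure_preimage hEj.nullMeasurableSet]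
    congr 1
    ext x
    simp [hT x]
  -- ties are null
  set Tie : Set (Fin K → ℝ) := ⋃ pq : Fin K × Fin K, {x | pq.1 ≠ pq.2 ∧ x pq.1 = x pq.2}
    with hTiedef
  have hTie : ν' Tie = 0 := by
    apply measure_iUnion_null
    intro pq
    by_cases hpq : pq.1 = pq.2
    · have : {x : Fin K → ℝ | pq.1 ≠ pq.2 ∧ x pq.1 = x pq.2} = ∅ := by
        ext x; simp [hpq]
      simp [this]
    · exact measure_mono_null (fun x hx => hx.2) (pi_measure_eq_coords_null hpq)
  have hGood : ∀ x : Fin K → ℝ, x ∉ Tie → (argmaxIdx (x ∘ ⇑e) = j ↔ argmaxIdx x = i) := by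
    intro x hx
    have hstrict : ∀ l, l ≠ argmaxIdx x → x l < x (argmaxIdx x) := by
      intro l hl
      rcases lt_or_eq_of_le (le_argmaxIdx x l) with h | h
      · exact h
      · exfalso
        apply hx
        rw [hTiedef]
        exact Set.mem_iUnion.mpr ⟨(l, argmaxIdx x), hl, h⟩
    have hswap : argmaxIdx (x ∘ ⇑e) = e.symm (argmaxIdx x) := by
      apply argmaxIdx_eq_of_strict
      intro l hl
      have hne : e l ≠ argmaxIdx x := by
        intro hcon
        exact hl (by rw [← hcon, Equiv.symm_apply_apply])
      show x (e l) < x (e (e.symm (argmaxIdx x)))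
      rw [Equiv.apply_symm_apply]
      exact hstrict _ hne
    rw [hswap, Equiv.symm_apply_eq, he, Equiv.swap_apply_right]
  have hstepA : ν (argmaxIdx ⁻¹' {j}) = ν' (argmaxIdx ⁻¹' {i}) := by
    rw [hpre]
    apply measure_congr
    rw [MeasureTheory.ae_eq_set]
    constructor
    · refine measure_mono_null (fun x hx => ?_) hTie
      by_contra hxT
      exact hx.2 ((hGood x hxT).mp hx.1)
    · refine measure_mono_null (fun x hx => ?_) hTie
      by_contra hxT
      exact hx.2 ((hGood x hxT).mpr hx.1)
  -- Step B : ν' {argmax = i} < ν {argmax = i}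
  set F : (Fin K → ℝ) → ℝ≥0∞ := fun x => ∏ l, gaussianPDF (m l) v (x l) with hFdef
  set G : (Fin K → ℝ) → ℝ≥0∞ := fun x => ∏ l, gaussianPDF (m (e l)) v (x l) with hGdef
  have hFmeas : Measurable F :=
    Finset.measurable_prod _ fun l _ => (measurable_gaussianPDF _ _).comp (measurable_pi_apply l)
  have hGmeas : Measurable G :=
    Finset.measurable_prod _ fun l _ => (measurable_gaussianPDF _ _).comp (measurable_pi_apply l)
  set vol : Measure (Fin K → ℝ) := Measure.pi fun _ : Fin K => (volume : Measure ℝ) with hvol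
  have hνF : ν (argmaxIdx ⁻¹' {i}) = ∫⁻ x in argmaxIdx ⁻¹' {i}, F x ∂vol := by
    rw [hν, pi_gaussian_withDensity m hv, withDensity_apply _ hEi]
  have hν'G : ν' (argmaxIdx ⁻¹' {i}) = ∫⁻ x in argmaxIdx ⁻¹' {i}, G x ∂vol := by
    rw [hν', pi_gaussian_withDensity (fun l => m (e l)) hv, withDensity_apply _ hEi]
  have hji : j ≠ i := hij.symm
  -- pointwise comparison
  have hsplitF : ∀ x : Fin K → ℝ, F x = gaussianPDF (m i) v (x i) * gaussianPDF (m j) v (x j)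
      * ∏ l ∈ (Finset.univ.erase i).erase j, gaussianPDF (m l) v (x l) := by
    intro x
    show (∏ l, gaussianPDF (m l) v (x l)) = _
    rw [← Finset.mul_prod_erase Finset.univ _ (Finset.mem_univ i),
      ← Finset.mul_prod_erase (Finset.univ.erase i) _
        (Finset.mem_erase.mpr ⟨hji, Finset.mem_univ j⟩), mul_assoc]
  have hsplitG : ∀ x : Fin K → ℝ, G x = gaussianPDF (m j) v (x i) * gaussianPDF (m i) v (x j)
      * ∏ l ∈ (Finset.univ.erase i).erase j, gaussianPDF (m l) v (x l) := by
    intro x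
    show (∏ l, gaussianPDF (m (e l)) v (x l)) = _
    rw [← Finset.mul_prod_erase Finset.univ _ (Finset.mem_univ i),
      ← Finset.mul_prod_erase (Finset.univ.erase i) _
        (Finset.mem_erase.mpr ⟨hji, Finset.mem_univ j⟩), mul_assoc]
    have h1 : e i = j := Equiv.swap_apply_left i j
    have h2 : e j = i := Equiv.swap_apply_right i j
    rw [h1, h2]
    congr 1
    congr 1
    apply Finset.prod_congr rfl
    intro l hl
    have hlj : l ≠ j := (Finset.mem_erase.mp hl).1
    have hli : l ≠ i := (Finset.mem_erase.mp (Finset.mem_erase.mp hl).2).1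
    rw [Equiv.swap_apply_of_ne_of_ne hli hlj]
  set T : (Fin K → ℝ) → ℝ≥0∞ :=
    fun x => ∏ l ∈ (Finset.univ.erase i).erase j, gaussianPDF (m l) v (x l) with hTdef
  have hT0 : ∀ x, T x ≠ 0 := by
    intro x
    show (∏ l ∈ (Finset.univ.erase i).erase j, gaussianPDF (m l) v (x l)) ≠ 0
    rw [Finset.prod_ne_zero_iff]
    exact fun l _ => (gaussianPDF_pos _ hv _).ne'
  have hTtop : ∀ x, T x ≠ ⊤ := by
    intro x
    refine (ENNReal.prod_lt_top fun l _ => ?_).ne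
    simp only [gaussianPDF]
    exact ENNReal.ofReal_lt_top
  have hkey_le : ∀ x : Fin K → ℝ, x j ≤ x i → G x ≤ F x := by
    intro x hx
    rw [hsplitF x, hsplitG x]
    apply mul_le_mul_left
    simp only [gaussianPDF]
    rw [← ENNReal.ofReal_mul (gaussianPDFReal_nonneg _ _ _),
      ← ENNReal.ofReal_mul (gaussianPDFReal_nonneg _ _ _)]
    exact ENNReal.ofReal_le_ofReal (gaussianPDFReal_mul_le hv hm hx)
  have hkey_lt : ∀ x : Fin K → ℝ, x j < x i → G x < F x := by
    intro x hx
    rw [hsplitF x, hsplitG x]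
    apply ENNReal.mul_lt_mul_left (hT0 x) (hTtop x)
    simp only [gaussianPDF]
    rw [← ENNReal.ofReal_mul (gaussianPDFReal_nonneg _ _ _),
      ← ENNReal.ofReal_mul (gaussianPDFReal_nonneg _ _ _)]
    rw [ENNReal.ofReal_lt_ofReal_iff
      (mul_pos (gaussianPDFReal_pos _ _ _ hv) (gaussianPDFReal_pos _ _ _ hv))]
    exact gaussianPDFReal_mul_lt hv hm hx
  have hGleF : ∀ x ∈ (argmaxIdx : (Fin K → ℝ) → Fin K) ⁻¹' {i}, G x ≤ F x := by
    intro x hx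
    have hxi : argmaxIdx x = i := hx
    apply hkey_le
    have := le_argmaxIdx x j
    rwa [hxi] at this
  -- the open set of strict maxima at i
  set O : Set (Fin K → ℝ) := {x | ∀ l, l ≠ i → x l < x i} with hOdef
  have hO_open : IsOpen O := by
    have : O = ⋂ l, {x : Fin K → ℝ | l ≠ i → x l < x i} := by
      ext x; simp [hOdef]
    rw [this]
    apply isOpen_iInter_of_finite
    intro l
    rcases eq_or_ne l i with rfl | hl
    · convert isOpen_univ
      ext x; simp
    · have hset : {x : Fin K → ℝ | l ≠ i → x l < x i} = {x : Fin K → ℝ | x l < x i} := by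
        ext x; simp [hl]
      rw [hset]
      exact isOpen_lt (continuous_apply l) (continuous_apply i)
  have hO_sub : O ⊆ (argmaxIdx : (Fin K → ℝ) → Fin K) ⁻¹' {i} := by
    intro x hx
    have : argmaxIdx x = i := argmaxIdx_eq_of_strict hx
    simp [this]
  have hO_ne : O.Nonempty := by
    refine ⟨fun l => if l = i then 1 else 0, ?_⟩
    intro l hl
    simp [hl]
  have hvolO : 0 < vol O := hO_open.measure_pos vol hO_ne
  have hsub_meas : Measurable fun x => F x - G x := hFmeas.sub hGmeas
  have hposO : 0 < ∫⁻ x in O, (F x - G x) ∂vol := by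
    rw [lintegral_pos_iff_support hsub_meas, Measure.restrict_apply
      (measurableSet_support hsub_meas)]
    have hOs : O ⊆ Function.support fun x => F x - G x := by
      intro x hx
      have hlt : G x < F x := hkey_lt x (hx j hji)
      have : 0 < F x - G x := tsub_pos_iff_lt.mpr hlt
      exact this.ne'
    rwa [Set.inter_eq_self_of_subset_right hOs]
  have hpos : 0 < ∫⁻ x in argmaxIdx ⁻¹' {i}, (F x - G x) ∂vol :=
    lt_of_lt_of_le hposO (lintegral_mono_set hO_sub)
  have hsum : ∫⁻ x in argmaxIdx ⁻¹' {i}, F x ∂vol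
      = (∫⁻ x in argmaxIdx ⁻¹' {i}, G x ∂vol)
        + ∫⁻ x in argmaxIdx ⁻¹' {i}, (F x - G x) ∂vol := by
    rw [← lintegral_add_left hGmeas]
    apply setLIntegral_congr_fun hEi
    intro x hx
    have h1 : F x - G x + G x = F x := tsub_add_cancel_of_le (hGleF x hx)
    rw [add_comm] at h1
    exact h1.symm
  have hfin : (∫⁻ x in argmaxIdx ⁻¹' {i}, G x ∂vol) ≠ ⊤ := by
    rw [← hν'G]
    exact measure_ne_top ν' _
  have hstepB : ν' (argmaxIdx ⁻¹' {i}) < ν (argmaxIdx ⁻¹' {i}) := by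
    rw [hνF, hν'G, hsum]
    exact ENNReal.lt_add_right hfin hpos.ne'
  rw [hstepA]
  exact hstepB

end Core

/-- **Discretized Gaussian transitions are not Uniform-state transitions.**  For `K ≥ 3`,
`w` with unique maximizing index `k`, `a ∈ (0,1)`, and indices `i, j ≠ k` with
`w i ≠ w j`, the argmax pushforward of `N(a w, (1-a²) I_K)` assigns different masses to
`i` and to `j`; in particular it is not of the form `Cat(α e_k + (1-α) 𝟙/K)` for any
`α ∈ [0,1]`. -/
theorem discretized_gaussian_kernel_not_uniform_state (K : ℕ) (hK : 3 ≤ K) [NeZero K]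
    (w : Fin K → ℝ) (k : Fin K) (hk : ∀ j ≠ k, w j < w k)
    (a : ℝ) (ha0 : 0 < a) (ha1 : a < 1)
    (i j : Fin K) (hik : i ≠ k) (hjk : j ≠ k) (hij : w i ≠ w j) :
    (∀ α : ℝ, 0 ≤ α → α ≤ 1 →
        ∃ m : Fin K,
          (Measure.map argmaxIdx
              (Measure.pi fun l : Fin K =>
                gaussianReal (a * w l) (Real.toNNReal (1 - a ^ 2)))) {m}
            ≠ ENNReal.ofReal
                (α * (if m = k then 1 else 0) + (1 - α) / (K : ℝ)))
      ∧ (Measure.map argmaxIdx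
            (Measure.pi fun l : Fin K =>
              gaussianReal (a * w l) (Real.toNNReal (1 - a ^ 2)))) {i}
          ≠ (Measure.map argmaxIdx
              (Measure.pi fun l : Fin K =>
                gaussianReal (a * w l) (Real.toNNReal (1 - a ^ 2)))) {j} := by
  have hv : (Real.toNNReal (1 - a ^ 2)) ≠ 0 := by
    refine (Real.toNNReal_pos.mpr ?_).ne'
    nlinarith
  have hijne : i ≠ j := fun hcon => hij (by rw [hcon])
  set ν : Measure (Fin K → ℝ) :=
    Measure.pi fun l : Fin K => gaussianReal (a * w l) (Real.toNNReal (1 - a ^ 2)) with hνdef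
  have hmap : ∀ m0 : Fin K, (Measure.map argmaxIdx ν) {m0} = ν (argmaxIdx ⁻¹' {m0}) :=
    fun m0 => Measure.map_apply measurable_argmaxIdx (measurableSet_singleton m0)
  have key : (Measure.map argmaxIdx ν) {i} ≠ (Measure.map argmaxIdx ν) {j} := by
    rw [hmap i, hmap j]
    rcases hij.lt_or_gt with h | h
    · exact (argmax_measure_lt (fun l => a * w l) hv j i hijne.symm
        (by exact mul_lt_mul_of_pos_left h ha0)).ne
    · exact (argmax_measure_lt (fun l => a * w l) hv i j hijne
        (by exact mul_lt_mul_of_pos_left h ha0)).ne'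
  refine ⟨fun α hα0 hα1 => ?_, key⟩
  by_cases hi' : (Measure.map argmaxIdx ν) {i}
      = ENNReal.ofReal (α * (if i = k then 1 else 0) + (1 - α) / (K : ℝ))
  · refine ⟨j, fun hj' => ?_⟩
    apply key
    rw [hi', hj', if_neg hik, if_neg hjk]
  · exact ⟨i, hi'⟩
end
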